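/- Let $f, g \in \mathbb{C}[X_1,\ldots,X_n]$ be such that $f = X_1 + f_2 + \cdots + f_l$ and $g = X_2 + g_2 + \cdots + g_m$, where $f_i, g_i$ are homogeneous of degree $i$. If every $2\times 2$ Jacobian minor of $(f,g)$ is a constant (i.e., $\deg[f,g] = 2$), then $f, g \in \mathbb{C}[X_1, X_2]$, i.e., $f$ and $g$ involve only the variables $X_1$ and $X_2$. -/

import Mathlib

open MvPolynomial

private lemma coeff_pderiv'' {σ : Type*} (i : σ) (m : σ →₀ ℕ) (f : MvPolynomial σ ℂ) :
    coeff m (pderiv i f) = ((m i : ℂ) + 1) * coeff (m + Finsupp.single i 1) f := by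
  classical
  induction f using MvPolynomial.induction_on' with
  | add p q hp hq => simp [hp, hq, mul_add]
  | monomial d a =>
    rw [pderiv_monomial, coeff_monomial, coeff_monomial]
    by_cases h : d = m + Finsupp.single i 1
    · subst h
      rw [if_pos (add_tsub_cancel_right _ _), if_pos rfl]
      rw [Finsupp.add_apply, Finsupp.single_eq_same]
      push_cast
      ring
    · rw [if_neg h]
      by_cases h1 : d - Finsupp.single i 1 = m
      · rw [if_pos h1]
        have hdi : d i = 0 := by
          by_contra hdi
          apply h
          rw [← h1, tsub_add_cancel_of_le]
          rwa [Finsupp.single_le_iff, Nat.one_le_iff_ne_zero]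
        simp [hdi]
      · rw [if_neg h1, mul_zero]

private lemma not_mem_vars_of_pderiv_eq_zero' {σ : Type*} {k : σ} {f : MvPolynomial σ ℂ}
    (h : pderiv k f = 0) : k ∉ f.vars := by
  intro hk
  rw [mem_vars] at hk
  obtain ⟨d, hd, hkd⟩ := hk
  have hne : coeff d f ≠ 0 := mem_support_iff.mp hd
  have hdk : d k ≠ 0 := Finsupp.mem_support_iff.mp hkd
  obtain ⟨e, he⟩ : ∃ e : σ →₀ ℕ, e = d - Finsupp.single k 1 := ⟨_, rfl⟩
  have hrec : e + Finsupp.single k 1 = d := by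
    rw [he]
    exact tsub_add_cancel_of_le (by rwa [Finsupp.single_le_iff, Nat.one_le_iff_ne_zero])
  have hco := coeff_pderiv'' k e f
  rw [h, hrec, coeff_zero] at hco
  have h2 : ((e k : ℂ) + 1) ≠ 0 := by
    have : ((e k + 1 : ℕ) : ℂ) ≠ 0 := Nat.cast_ne_zero.mpr (Nat.succ_ne_zero _)
    push_cast at this
    exact this
  exact hne ((mul_eq_zero.mp hco.symm).resolve_left h2)

private lemma eq_C_of_td_zero' {σ : Type*} {p : MvPolynomial σ ℂ} (h : p.totalDegree = 0) :
    p = C (coeff 0 p) := by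
  classical
  rw [totalDegree_eq_zero_iff] at h
  ext m
  by_cases hm : m = 0
  · subst hm; simp
  · have hms : m ∉ p.support := fun hs => hm (Finsupp.ext fun x => h m hs x)
    rw [notMem_support_iff] at hms
    rw [hms, coeff_C, if_neg fun h0 => hm h0.symm]

theorem poisson_deg_two_two_variables (n : ℕ)
    (f g : MvPolynomial (Fin (n + 3)) ℂ)
    (hf0 : homogeneousComponent 0 f = 0)
    (hf1 : homogeneousComponent 1 f = X 0)
    (hg0 : homogeneousComponent 0 g = 0)
    (hg1 : homogeneousComponent 1 g = X 1)
    (hbr : ∀ j k : Fin (n + 3),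
      (pderiv j f * pderiv k g - pderiv k f * pderiv j g).totalDegree = 0) :
    f ∈ supported ℂ ({0, 1} : Set (Fin (n + 3))) ∧
      g ∈ supported ℂ ({0, 1} : Set (Fin (n + 3))) := by
  classical
  have hdeg1 : ∀ j : Fin (n + 3), (Finsupp.single j 1).degree = 1 := by
    intro j
    exact Finsupp.degree_single j 1
  -- linear coefficients of f and g
  have hcf : ∀ j : Fin (n + 3), coeff (Finsupp.single j 1) f = if j = 0 then 1 else 0 := by
    intro j
    have h1 := coeff_homogeneousComponent (φ := f) 1 (Finsupp.single j 1)
    rw [hf1, if_pos (hdeg1 j)] at h1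
    rw [← h1, coeff_X']
    by_cases hj : j = 0
    · subst hj; simp
    · rw [if_neg hj, if_neg (by
        rw [Finsupp.single_left_inj (one_ne_zero)]
        exact fun h => hj h.symm)]
  have hcg : ∀ j : Fin (n + 3), coeff (Finsupp.single j 1) g = if j = 1 then 1 else 0 := by
    intro j
    have h1 := coeff_homogeneousComponent (φ := g) 1 (Finsupp.single j 1)
    rw [hg1, if_pos (hdeg1 j)] at h1
    rw [← h1, coeff_X']
    by_cases hj : j = 1
    · subst hj; simp
    · rw [if_neg hj, if_neg (by
        rw [Finsupp.single_left_inj (one_ne_zero)]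
        exact fun h => hj h.symm)]
  have hc0 : ∀ (j : Fin (n + 3)) (p : MvPolynomial (Fin (n + 3)) ℂ),
      coeff 0 (pderiv j p) = coeff (Finsupp.single j 1) p := by
    intro j p
    have := coeff_pderiv'' j 0 p
    simpa using this
  -- every minor equals the constant given by linear coefficients
  have hJ : ∀ j k : Fin (n + 3),
      pderiv j f * pderiv k g - pderiv k f * pderiv j g
        = C (coeff (Finsupp.single j 1) f * coeff (Finsupp.single k 1) g
            - coeff (Finsupp.single k 1) f * coeff (Finsupp.single j 1) g) := by
    intro j k
    have h := eq_C_of_td_zero' (hbr j k)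
    rw [h]
    congr 1
    rw [← constantCoeff_eq, map_sub, map_mul, map_mul, constantCoeff_eq]
    simp only [hc0]
  have hJ01 : pderiv (0 : Fin (n + 3)) f * pderiv (1 : Fin (n + 3)) g
      - pderiv (1 : Fin (n + 3)) f * pderiv (0 : Fin (n + 3)) g = 1 := by
    rw [hJ 0 1, hcf, hcg, hcf, hcg]
    norm_num
  have key : ∀ k : Fin (n + 3), k ≠ 0 → k ≠ 1 → pderiv k f = 0 ∧ pderiv k g = 0 := by
    intro k hk0 hk1
    have hA : pderiv (0 : Fin (n + 3)) f * pderiv k g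
        - pderiv k f * pderiv (0 : Fin (n + 3)) g = 0 := by
      rw [hJ 0 k, hcf, hcg, hcf, hcg, if_pos rfl, if_neg hk1, if_neg hk0]
      norm_num
    have hB : pderiv (1 : Fin (n + 3)) f * pderiv k g
        - pderiv k f * pderiv (1 : Fin (n + 3)) g = 0 := by
      rw [hJ 1 k, hcf, hcg, hcf, hcg, if_pos rfl, if_neg hk1, if_neg hk0,
        if_neg (by norm_num : (1 : Fin (n + 3)) ≠ 0)]
      norm_num
    constructor
    · linear_combination pderiv (1 : Fin (n + 3)) f * hA - pderiv (0 : Fin (n + 3)) f * hB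
        - pderiv k f * hJ01
    · linear_combination pderiv (1 : Fin (n + 3)) g * hA - pderiv (0 : Fin (n + 3)) g * hB
        - pderiv k g * hJ01
  constructor
  · rw [mem_supported]
    intro k hk
    by_contra hk01
    simp only [Set.mem_insert_iff, Set.mem_singleton_iff, not_or] at hk01
    exact not_mem_vars_of_pderiv_eq_zero' (key k hk01.1 hk01.2).1 hk
  · rw [mem_supported]
    intro k hk
    by_contra hk01
    simp only [Set.mem_insert_iff, Set.mem_singleton_iff, not_or] at hk01
    exact not_mem_vars_of_pderiv_eq_zero' (key k hk01.1 hk01.2).2 hk
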